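/- For n, j ≥ 0, the degenerate r-Whitney numbers of the second kind satisfy W^{(r)}_{m,λ}(n,j) = Σ_{l=j}^n C(n,l) (r)_{n-l,λ} m^{l-j} S_{2,λ/m}(l,j). -/

import Mathlib

open Finset

/-- Degenerate falling factorial `(x)_{n,λ} = x(x-λ)⋯(x-(n-1)λ)`. -/
noncomputable def dfall (lam x : ℝ) (n : ℕ) : ℝ := ∏ i ∈ Finset.range n, (x - i * lam)

/-- Ordinary falling factorial `(x)_n = x(x-1)⋯(x-n+1)`. -/
noncomputable def ffall (x : ℝ) (n : ℕ) : ℝ := ∏ i ∈ Finset.range n, (x - i)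

lemma dfall_succ (lam x : ℝ) (n : ℕ) :
    dfall lam x (n + 1) = dfall lam x n * (x - n * lam) := by
  simp [dfall, Finset.prod_range_succ]

lemma ffall_nat_of_lt (t k : ℕ) (h : t < k) : ffall (t : ℝ) k = 0 := by
  apply Finset.prod_eq_zero (Finset.mem_range.mpr h)
  simp

lemma ffall_nat_ne_zero (t : ℕ) : ffall (t : ℝ) t ≠ 0 := by
  rw [ffall]
  apply Finset.prod_ne_zero_iff.mpr
  intro i hi
  have h1 : i < t := Finset.mem_range.mp hi
  have h2 : (i : ℝ) < t := by exact_mod_cast h1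
  intro hc
  linarith

lemma coeff_unique (N : ℕ) (c : ℕ → ℝ)
    (h : ∀ x : ℝ, ∑ k ∈ Finset.range (N + 1), c k * ffall x k = 0) :
    ∀ j, j ≤ N → c j = 0 := by
  intro j
  induction j using Nat.strong_induction_on with
  | _ j ih =>
    intro hj
    have h0 := h (j : ℝ)
    have hs : ∑ k ∈ Finset.range (N + 1), c k * ffall (j : ℝ) k
        = c j * ffall (j : ℝ) j := by
      apply Finset.sum_eq_single
      · intro k hk hne
        rcases lt_or_gt_of_ne hne with hlt | hgt
        · rw [ih k hlt (le_of_lt (lt_of_lt_of_le hlt hj))]; ring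
        · rw [ffall_nat_of_lt j k hgt]; ring
      · intro hmem
        exact absurd (Finset.mem_range.mpr (Nat.lt_succ_of_le hj)) hmem
    rw [hs] at h0
    exact (mul_eq_zero.mp h0).resolve_right (ffall_nat_ne_zero j)

lemma dfall_add (lam a b : ℝ) : ∀ n : ℕ,
    dfall lam (a + b) n =
      ∑ l ∈ Finset.range (n + 1),
        (n.choose l : ℝ) * dfall lam a (n - l) * dfall lam b l := by
  intro n
  induction n with
  | zero => simp [dfall]
  | succ n ih =>
    rw [dfall_succ, ih, Finset.sum_mul]
    have key : ∀ l ∈ Finset.range (n + 1),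
        (n.choose l : ℝ) * dfall lam a (n - l) * dfall lam b l * (a + b - n * lam)
        = (n.choose l : ℝ) * dfall lam a (n - l + 1) * dfall lam b l
          + (n.choose l : ℝ) * dfall lam a (n - l) * dfall lam b (l + 1) := by
      intro l hl
      have hl' : l ≤ n := Nat.lt_succ_iff.mp (Finset.mem_range.mp hl)
      have hcast : ((n - l : ℕ) : ℝ) = (n : ℝ) - l := by
        rw [Nat.cast_sub hl']
      rw [dfall_succ, dfall_succ, hcast]
      ring
    rw [Finset.sum_congr rfl key, Finset.sum_add_distrib]
    -- first sum: rewrite n - l + 1 = n + 1 - l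
    have e1 : ∑ l ∈ Finset.range (n + 1),
        (n.choose l : ℝ) * dfall lam a (n - l + 1) * dfall lam b l
        = ∑ l ∈ Finset.range (n + 1),
        (n.choose l : ℝ) * dfall lam a (n + 1 - l) * dfall lam b l := by
      apply Finset.sum_congr rfl
      intro l hl
      have hl' : l ≤ n := Nat.lt_succ_iff.mp (Finset.mem_range.mp hl)
      rw [Nat.sub_add_comm hl']
    rw [e1]
    -- RHS: split off l = 0 via sum_range_succ'
    rw [Finset.sum_range_succ' (fun l =>
      ((n + 1).choose l : ℝ) * dfall lam a (n + 1 - l) * dfall lam b l) (n + 1)]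
    -- LHS first sum: split off l = 0 too
    rw [Finset.sum_range_succ' (fun l =>
      (n.choose l : ℝ) * dfall lam a (n + 1 - l) * dfall lam b l) n]
    simp only [Nat.choose_zero_right, Nat.cast_one, Nat.sub_zero]
    have e2 : ∑ i ∈ Finset.range (n + 1),
        ((n + 1).choose (i + 1) : ℝ) * dfall lam a (n + 1 - (i + 1)) * dfall lam b (i + 1)
        = ∑ i ∈ Finset.range n,
            (n.choose (i + 1) : ℝ) * dfall lam a (n + 1 - (i + 1)) * dfall lam b (i + 1)
          + ∑ i ∈ Finset.range (n + 1),
            (n.choose i : ℝ) * dfall lam a (n - i) * dfall lam b (i + 1) := by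
      have pascal : ∀ i, ((n + 1).choose (i + 1) : ℝ) = (n.choose i : ℝ) + (n.choose (i + 1) : ℝ) := by
        intro i
        rw [Nat.choose_succ_succ]
        push_cast
        ring
      have : ∑ i ∈ Finset.range (n + 1),
          ((n + 1).choose (i + 1) : ℝ) * dfall lam a (n + 1 - (i + 1)) * dfall lam b (i + 1)
          = ∑ i ∈ Finset.range (n + 1),
            ((n.choose i : ℝ) * dfall lam a (n - i) * dfall lam b (i + 1)
             + (n.choose (i + 1) : ℝ) * dfall lam a (n + 1 - (i + 1)) * dfall lam b (i + 1)) := by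
        apply Finset.sum_congr rfl
        intro i _
        rw [pascal i]
        have : n + 1 - (i + 1) = n - i := by omega
        rw [this]
        ring
      rw [this, Finset.sum_add_distrib]
      rw [Finset.sum_range_succ (fun i =>
        (n.choose (i + 1) : ℝ) * dfall lam a (n + 1 - (i + 1)) * dfall lam b (i + 1)) n]
      simp [Nat.choose_succ_self]
      ring
    rw [e2]
    ring

lemma dfall_scale (m : ℕ) (hm : (m : ℝ) ≠ 0) (lam x : ℝ) (l : ℕ) :
    dfall lam ((m : ℝ) * x) l = (m : ℝ) ^ l * dfall (lam / m) x l := by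
  rw [dfall, dfall]
  have h1 : ∀ i ∈ Finset.range l, (m : ℝ) * x - i * lam = (m : ℝ) * (x - i * (lam / m)) := by
    intro i _
    field_simp
  rw [Finset.prod_congr rfl h1, Finset.prod_mul_distrib, Finset.prod_const, Finset.card_range]

lemma sum_triangle (n : ℕ) (f : ℕ → ℕ → ℝ) :
    ∑ l ∈ Finset.range (n + 1), ∑ k ∈ Finset.range (l + 1), f l k
      = ∑ k ∈ Finset.range (n + 1), ∑ l ∈ Finset.Icc k n, f l k := by
  apply Finset.sum_comm'
  intro l k
  simp only [Finset.mem_range, Finset.mem_Icc]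
  omega

theorem stmt10 (m : ℕ) (hm : 0 < m) (r : ℕ) (lam : ℝ) (hlam : lam ≠ 0)
    (W : ℕ → ℕ → ℝ)
    (hW : ∀ (x : ℝ) (N : ℕ),
      dfall lam ((m : ℝ) * x + r) N = ∑ k ∈ Finset.range (N + 1), W N k * (m : ℝ) ^ k * ffall x k)
    (S : ℕ → ℕ → ℝ)
    (hS : ∀ (x : ℝ) (N : ℕ),
      dfall (lam / m) x N = ∑ k ∈ Finset.range (N + 1), S N k * ffall x k)
    (n j : ℕ) (hj : j ≤ n) :
    W n j = ∑ l ∈ Finset.Icc j n,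
      (n.choose l : ℝ) * dfall lam (r : ℝ) (n - l) * (m : ℝ) ^ (l - j) * S l j := by
  have hm' : (m : ℝ) ≠ 0 := Nat.cast_ne_zero.mpr hm.ne'
  set D : ℕ → ℝ := fun k => ∑ l ∈ Finset.Icc k n,
      (n.choose l : ℝ) * dfall lam (r : ℝ) (n - l) * (m : ℝ) ^ (l - k) * S l k with hD
  -- key expansion
  have key : ∀ x : ℝ, dfall lam ((m : ℝ) * x + r) n
      = ∑ k ∈ Finset.range (n + 1), (D k * (m : ℝ) ^ k) * ffall x k := by
    intro x
    have h1 : dfall lam ((m : ℝ) * x + r) n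
        = ∑ l ∈ Finset.range (n + 1),
            (n.choose l : ℝ) * dfall lam (r : ℝ) (n - l) * dfall lam ((m : ℝ) * x) l := by
      rw [show (m : ℝ) * x + r = (r : ℝ) + (m : ℝ) * x by ring]
      exact dfall_add lam (r : ℝ) ((m : ℝ) * x) n
    rw [h1]
    have h2 : ∀ l ∈ Finset.range (n + 1),
        (n.choose l : ℝ) * dfall lam (r : ℝ) (n - l) * dfall lam ((m : ℝ) * x) l
        = ∑ k ∈ Finset.range (l + 1),
            (n.choose l : ℝ) * dfall lam (r : ℝ) (n - l) * (m : ℝ) ^ l * (S l k * ffall x k) := by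
      intro l _
      rw [dfall_scale m hm' lam x l, hS x l]
      simp only [Finset.mul_sum]
      exact Finset.sum_congr rfl fun k _ => by ring
    rw [Finset.sum_congr rfl h2, sum_triangle]
    apply Finset.sum_congr rfl
    intro k hk
    rw [hD]
    simp only
    rw [Finset.sum_mul, Finset.sum_mul]
    apply Finset.sum_congr rfl
    intro l hl
    have hkl : k ≤ l := (Finset.mem_Icc.mp hl).1
    have : (m : ℝ) ^ l = (m : ℝ) ^ (l - k) * (m : ℝ) ^ k := by
      rw [← pow_add, Nat.sub_add_cancel hkl]
    rw [this]
    ring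
  -- uniqueness of coefficients
  have hz : ∀ x : ℝ, ∑ k ∈ Finset.range (n + 1),
      (W n k * (m : ℝ) ^ k - D k * (m : ℝ) ^ k) * ffall x k = 0 := by
    intro x
    have := (hW x n).symm.trans (key x)
    simp only [sub_mul]
    rw [Finset.sum_sub_distrib]
    rw [sub_eq_zero]
    exact this
  have := coeff_unique n (fun k => W n k * (m : ℝ) ^ k - D k * (m : ℝ) ^ k) hz j hj
  have hmj : (m : ℝ) ^ j ≠ 0 := pow_ne_zero j hm'
  have heq : W n j * (m : ℝ) ^ j = D j * (m : ℝ) ^ j := sub_eq_zero.mp this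
  have := mul_right_cancel₀ hmj heq
  rw [this]
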